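/- For $n \ge 1$, let $T_n$ be the set of triangular arrays $(m_{k,i})_{1\le i\le k\le n}$ with entries in $\{0,1\}$ satisfying $m_{n,i}=1$ for all $i$ and $m_{k,i}\le m_{k+1,i}, m_{k+1,i+1}$, and for $\underline{m}\in T_n$ let $D(\underline{m}) = \sum_{k=1}^{n-1}\big(\sum_{i=1}^k m_{k,i}^2 - \sum_{i=1}^{k-1} m_{k,i}m_{k,i+1}\big)$. Then $\sum_{\underline{m}\in T_n} q^{D(\underline{m})} = \sum_{j=0}^{n-1} \frac{1}{n}\binom{n}{j}\binom{n}{j+1} q^{n-1-j}$, the $n$-th Narayana polynomial (with valley statistic). -/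

import Mathlib

/-- A triangular array `(m_{k,i})_{1 ≤ i ≤ k ≤ n}` with entries in `{0,1}`
satisfying `m_{n,i} = 1` and `m_{k,i} ≤ m_{k+1,i}, m_{k+1,i+1}`, encoded as a
function `ℕ → ℕ → ℕ` that vanishes outside the triangle `1 ≤ i ≤ k ≤ n`. -/
def IsArr (n : ℕ) (m : ℕ → ℕ → ℕ) : Prop :=
  (∀ k i, m k i ≤ 1) ∧
  (∀ i, 1 ≤ i → i ≤ n → m n i = 1) ∧
  (∀ k i, 1 ≤ i → i ≤ k → k ≤ n - 1 → m k i ≤ m (k + 1) i ∧ m k i ≤ m (k + 1) (i + 1)) ∧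
  (∀ k i, ¬(1 ≤ i ∧ i ≤ k ∧ k ≤ n) → m k i = 0)

/-- The statistic `D(m) = ∑_{k=1}^{n-1} (∑_{i=1}^k m_{k,i}² - ∑_{i=1}^{k-1} m_{k,i} m_{k,i+1})`. -/
def Dstat (n : ℕ) (m : ℕ → ℕ → ℕ) : ℕ :=
  ∑ k ∈ Finset.Icc 1 (n - 1),
    ((∑ i ∈ Finset.Icc 1 k, (m k i) ^ 2) - ∑ i ∈ Finset.Icc 1 (k - 1), m k i * m k (i + 1))


namespace Stmt11
open Finset Polynomial


def SL : ℕ → ℕ → Finset (List ℕ)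
  | 0, _ => {[]}
  | N+1, c => (Finset.range (min c N + 1)).biUnion (fun h => (SL N h).image (h :: ·))

def desc : List ℕ → ℕ
  | [] => 0
  | [_] => 0
  | a :: b :: t => (if b < a then 1 else 0) + desc (b :: t)



lemma mem_SL {N c : ℕ} {l : List ℕ} :
    l ∈ SL N c ↔ l.length = N ∧ (∀ i, i + 1 < N → l.getD (i+1) 0 ≤ l.getD i 0) ∧
      (∀ i, i < N → l.getD i 0 + i + 1 ≤ N) ∧ (0 < N → l.getD 0 0 ≤ c) := by
  induction N generalizing c l with
  | zero =>
    simp only [SL, Finset.mem_singleton, List.length_eq_zero_iff]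
    constructor
    · rintro rfl; simp
    · rintro ⟨rfl, _⟩; rfl
  | succ N ih =>
    constructor
    · intro hl
      simp only [SL, Finset.mem_biUnion, Finset.mem_range, Finset.mem_image] at hl
      obtain ⟨h, hh, t, ht, rfl⟩ := hl
      rw [ih] at ht
      obtain ⟨hlen, hanti, hbd, hhd⟩ := ht
      refine ⟨by simp [hlen], ?_, ?_, ?_⟩
      · intro i hi
        match i with
        | 0 =>
          rcases t with _ | ⟨b, t⟩
          · simp at hlen; omega
          · have := hhd (by omega)
            simp only [List.getD_cons_succ, List.getD_cons_zero] at this ⊢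
            omega
        | i+1 =>
          have := hanti i (by omega)
          simpa using this
      · intro i hi
        match i with
        | 0 => simp only [List.getD_cons_zero]; omega
        | i+1 =>
          have := hbd i (by omega)
          simp only [List.getD_cons_succ]
          omega
      · intro _; simp only [List.getD_cons_zero]; omega
    · rintro ⟨hlen, hanti, hbd, hhd⟩
      rcases l with _ | ⟨h, t⟩
      · simp at hlen
      simp only [SL, Finset.mem_biUnion, Finset.mem_range, Finset.mem_image]
      refine ⟨h, ?_, t, ?_, rfl⟩
      · have h1 := hhd (by omega)
        have h2 := hbd 0 (by omega)
        simp only [List.getD_cons_zero] at h1 h2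
        omega
      · rw [ih]
        simp only [List.length_cons] at hlen
        refine ⟨by omega, ?_, ?_, ?_⟩
        · intro i hi
          have := hanti (i+1) (by omega)
          simpa using this
        · intro i hi
          have := hbd (i+1) (by omega)
          simp only [List.getD_cons_succ] at this
          omega
        · intro ht0
          rcases t with _ | ⟨b, t⟩
          · simp
          · have := hanti 0 (by omega)
            simpa using this


noncomputable def Pol (N c : ℕ) : Polynomial ℚ := ∑ l ∈ SL N c, X ^ (desc l)

lemma desc_cons (h : ℕ) (l : List ℕ) (hl : l ≠ []) :
    desc (h :: l) = (if l.getD 0 0 < h then 1 else 0) + desc l := by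
  cases l with
  | nil => exact absurd rfl hl
  | cons b t => rfl

lemma SL_mono {N c c' : ℕ} (h : c ≤ c') : SL N c ⊆ SL N c' := by
  intro l hl
  rw [mem_SL] at *
  exact ⟨hl.1, hl.2.1, hl.2.2.1, fun hN => (hl.2.2.2 hN).trans h⟩

lemma SL_trunc {N c : ℕ} : SL (N+1) c = SL (N+1) (min c N) := by
  ext l
  rw [mem_SL, mem_SL]
  constructor
  · rintro ⟨h1, h2, h3, h4⟩
    refine ⟨h1, h2, h3, fun hN => ?_⟩
    have := h3 0 (by omega)
    have := h4 hN
    omega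
  · rintro ⟨h1, h2, h3, h4⟩
    exact ⟨h1, h2, h3, fun hN => (h4 hN).trans (by omega)⟩

lemma Pol_trunc {N c : ℕ} : Pol (N+1) c = Pol (N+1) (min c N) := by
  unfold Pol; rw [SL_trunc]

lemma Pol_rec (N c : ℕ) :
    Pol (N+1) c = ∑ h ∈ Finset.range (min c N + 1), ∑ l ∈ SL N h, X ^ (desc (h :: l)) := by
  unfold Pol
  show ∑ l ∈ (Finset.range (min c N + 1)).biUnion (fun h => (SL N h).image (h :: ·)), _ = _
  rw [Finset.sum_biUnion]
  · refine Finset.sum_congr rfl fun h _ => ?_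
    rw [Finset.sum_image]
    intro a _ b _ hab
    simpa using hab
  · intro a _ b _ hab
    simp only [Function.onFun]
    rw [Finset.disjoint_left]
    intro l hla hlb
    simp only [Finset.mem_image] at hla hlb
    obtain ⟨_, _, rfl⟩ := hla
    obtain ⟨_, _, h2⟩ := hlb
    exact hab (List.head_eq_of_cons_eq h2).symm

lemma SL_ne_nil {N c : ℕ} {l : List ℕ} (hN : 1 ≤ N) (hl : l ∈ SL N c) : l ≠ [] := by
  rw [mem_SL] at hl
  intro h; subst h; simp at hl; omega

lemma inner_zero (N : ℕ) (hN : 1 ≤ N) :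
    ∑ l ∈ SL N 0, X ^ (desc (0 :: l)) = Pol N 0 := by
  refine Finset.sum_congr rfl fun l hl => ?_
  rw [desc_cons _ _ (SL_ne_nil hN hl)]
  simp

lemma inner_succ (N h : ℕ) (hN : 1 ≤ N) :
    ∑ l ∈ SL N (h+1), X ^ (desc ((h+1) :: l)) =
      X * Pol N h + Pol N (h+1) - Pol N h := by
  have hsub : SL N h ⊆ SL N (h+1) := SL_mono (by omega)
  rw [← Finset.sum_sdiff hsub]
  have e1 : ∑ l ∈ SL N (h+1) \ SL N h, (X:ℚ[X]) ^ (desc ((h+1) :: l)) =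
      ∑ l ∈ SL N (h+1) \ SL N h, (X:ℚ[X]) ^ (desc l) := by
    refine Finset.sum_congr rfl fun l hl => ?_
    rw [Finset.mem_sdiff] at hl
    rw [desc_cons _ _ (SL_ne_nil hN hl.1)]
    have h1 := (mem_SL.mp hl.1)
    have h2 : ¬ (l.getD 0 0 ≤ h) := by
      intro hc
      exact hl.2 (mem_SL.mpr ⟨h1.1, h1.2.1, h1.2.2.1, fun _ => hc⟩)
    rw [if_neg (by omega)]
    rw [zero_add]
  have e2 : ∑ l ∈ SL N h, X ^ (desc ((h+1) :: l)) =
      X * Pol N h := by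
    rw [Pol, Finset.mul_sum]
    refine Finset.sum_congr rfl fun l hl => ?_
    rw [desc_cons _ _ (SL_ne_nil hN hl)]
    have h1 := (mem_SL.mp hl).2.2.2 hN
    rw [if_pos (by omega)]
    ring
  rw [e1, e2]
  have e3 : ∑ l ∈ SL N (h+1) \ SL N h, (X:ℚ[X]) ^ (desc l) = Pol N (h+1) - Pol N h := by
    have := Finset.sum_sdiff hsub (f := fun l => (X:ℚ[X]) ^ (desc l))
    unfold Pol
    linear_combination this
  rw [e3]; ring

lemma Pol_telescope (N c : ℕ) (hN : 1 ≤ N) :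
    Pol (N+1) c = X * (∑ h ∈ Finset.range (min c N), Pol N h) + Pol N (min c N) := by
  rw [Pol_rec]
  suffices H : ∀ m, ∑ h ∈ Finset.range (m + 1), ∑ l ∈ SL N h, (X:ℚ[X]) ^ (desc (h :: l)) =
      X * (∑ h ∈ Finset.range m, Pol N h) + Pol N m from H (min c N)
  intro m
  induction m with
  | zero => simp [inner_zero N hN]
  | succ m ih =>
    rw [Finset.sum_range_succ, ih, inner_succ N m hN, Finset.sum_range_succ]
    ring


noncomputable def fc (c M j : ℕ) : ℚ :=
  (c.choose j) * (M.choose j) - (if j = 0 then 0 else (c.choose (j+1)) * (M.choose (j-1)))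

lemma pas (a b : ℕ) : (((a+1).choose (b+1) : ℕ) : ℚ) = a.choose b + a.choose (b+1) := by
  exact_mod_cast Nat.choose_succ_succ a b

lemma sumFc (M j : ℕ) : ∀ c : ℕ, ∑ h ∈ Finset.range (c+1), fc h M j =
    ((c+1).choose (j+1)) * M.choose j -
      (if j = 0 then 0 else ((c+1).choose (j+2)) * M.choose (j-1)) := by
  intro c
  induction c with
  | zero =>
    rw [Finset.sum_range_one]
    rcases j with _ | t
    · simp [fc]
    · simp [fc, Nat.choose_eq_zero_of_lt (show 1 < t+2 by omega),
        Nat.choose_eq_zero_of_lt (show 1 < t+3 by omega),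
        Nat.choose_eq_zero_of_lt (show 0 < t+1 by omega),
        Nat.choose_eq_zero_of_lt (show 0 < t+2 by omega)]
  | succ c ih =>
    rw [Finset.sum_range_succ, ih]
    rcases j with _ | t
    · norm_num [fc]
    · norm_num [fc]
      linear_combination (-(↑(M.choose (t+1)) : ℚ)) * pas (c+1) (t+1)
        + (↑(M.choose t) : ℚ) * pas (c+1) (t+2)

lemma fc_zero (c M : ℕ) : fc c M 0 = 1 := by simp [fc]

lemma fc_top {c M : ℕ} (h : c ≤ M) : fc c M (M+1) = 0 := by
  simp [fc, Nat.choose_eq_zero_of_lt (show M < M+1 by omega),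
    Nat.choose_eq_zero_of_lt (show c < M+2 by omega)]

lemma key (N c j : ℕ) (hc : c ≤ N + 1) :
    (∑ h ∈ Finset.range c, fc h N j) + fc (min c N) N (j+1) = fc c (N+1) (j+1) := by
  rcases Nat.eq_zero_or_pos c with rfl | hcpos
  · simp only [Finset.range_zero, Finset.sum_empty, Nat.zero_min, zero_add]
    rcases j with _ | t
    · norm_num [fc]
    · norm_num [fc, Nat.choose_eq_zero_of_lt (show 0 < t+2 by omega),
        Nat.choose_eq_zero_of_lt (show 0 < t+3 by omega)]
  obtain ⟨d, rfl⟩ : ∃ d, c = d + 1 := ⟨c - 1, by omega⟩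
  rw [sumFc]
  rcases Nat.lt_or_ge d N with hdN | hdN
  · have hmin : min (d+1) N = d + 1 := by omega
    rw [hmin]
    rcases j with _ | t
    · norm_num [fc, Nat.choose_zero_right, Nat.choose_one_right]
      ring
    · norm_num [fc]
      linear_combination (-(↑((d+1).choose (t+2)) : ℚ)) * pas N (t+1)
        + (↑((d+1).choose (t+3)) : ℚ) * pas N t
  · have hd : d = N := by omega
    subst hd
    have hmin : min (d+1) d = d := by omega
    rw [hmin]
    rcases j with _ | t
    · have p2 : (((d+1).choose 2 : ℕ) : ℚ) = d + d.choose 2 := by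
        rw [pas d 1]; norm_num [Nat.choose_one_right]
      norm_num [fc, Nat.choose_zero_right, Nat.choose_one_right]
      linear_combination p2
    · norm_num [fc]
      linear_combination (-(↑(d.choose (t+2)) + ↑((d+1).choose (t+2)) : ℚ)) * pas d (t+1)
        + (↑(d.choose (t+1)) : ℚ) * pas d (t+2)
        + (↑((d+1).choose (t+3)) : ℚ) * pas d t


theorem Pol_eq : ∀ N, ∀ c, c ≤ N → Pol (N+1) c
    = ∑ j ∈ Finset.range (N+1), Polynomial.C (fc c N j) * X ^ j := by
  intro N
  induction N with
  | zero =>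
    intro c hc
    interval_cases c
    rw [Pol_rec]
    simp [SL, desc, fc]
  | succ N IH =>
    intro c hc
    rw [Pol_telescope (N+1) c (by omega), show min c (N+1) = c by omega]
    have hc' : min c N ≤ N := by omega
    have hPc : Pol (N+1) c = ∑ j ∈ Finset.range (N+1), Polynomial.C (fc (min c N) N j) * X ^ j := by
      rw [Pol_trunc]; exact IH (min c N) hc'
    have hsum : ∑ h ∈ Finset.range c, Pol (N+1) h
        = ∑ j ∈ Finset.range (N+1), Polynomial.C (∑ h ∈ Finset.range c, fc h N j) * X ^ j := by
      rw [Finset.sum_congr rfl (fun h hh => IH h (by simp only [Finset.mem_range] at hh; omega))]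
      rw [Finset.sum_comm]
      exact Finset.sum_congr rfl fun j _ => by rw [← Finset.sum_mul, ← map_sum]
    rw [hPc, hsum, Finset.mul_sum]
    rw [Finset.sum_congr rfl (fun j (_ : j ∈ Finset.range (N+1)) =>
      show X * (Polynomial.C (∑ h ∈ Finset.range c, fc h N j) * X ^ j)
        = Polynomial.C (∑ h ∈ Finset.range c, fc h N j) * X ^ (j+1) by ring)]
    have ext2 : ∑ j ∈ Finset.range (N+1), Polynomial.C (fc (min c N) N j) * X ^ j
        = ∑ j ∈ Finset.range (N+2), Polynomial.C (fc (min c N) N j) * X ^ j := by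
      rw [Finset.sum_range_succ (fun j => Polynomial.C (fc (min c N) N j) * X ^ j) (N+1), fc_top hc', map_zero, zero_mul, add_zero]
    rw [ext2]
    rw [Finset.sum_range_succ' (fun j => Polynomial.C (fc (min c N) N j) * X ^ j) (N+1)]
    rw [Finset.sum_range_succ' (fun j => Polynomial.C (fc c (N+1) j) * X ^ j) (N+1)]
    rw [← add_assoc, ← Finset.sum_add_distrib]
    congr 1
    · refine Finset.sum_congr rfl fun j _ => ?_
      rw [← add_mul, ← map_add, key N c j hc]
    · rw [fc_zero, fc_zero]


def Phi (n : ℕ) (l : List ℕ) : ℕ → ℕ → ℕ := fun k i =>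
  if 1 ≤ i ∧ i ≤ k ∧ k ≤ n ∧ l.getD (i-1) 0 + i ≤ k then 1 else 0

lemma desc_eq_sum : ∀ l : List ℕ,
    desc l = ∑ i ∈ Finset.range (l.length - 1), if l.getD (i+1) 0 < l.getD i 0 then 1 else 0 := by
  intro l
  induction l with
  | nil => simp [desc]
  | cons a t ih =>
    cases t with
    | nil => simp [desc]
    | cons b t =>
      show desc (a :: b :: t) = ∑ i ∈ Finset.range (t.length + 1), _
      rw [Finset.sum_range_succ',
        show desc (a :: b :: t) = (if b < a then 1 else 0) + desc (b :: t) from rfl, ih]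
      simp only [List.length_cons, Nat.add_sub_cancel, List.getD_cons_succ, List.getD_cons_zero]
      exact add_comm _ _

lemma phi_isArr {n : ℕ} (hn : 1 ≤ n) {l : List ℕ} (hl : l ∈ SL n (n-1)) :
    IsArr n (Phi n l) := by
  obtain ⟨hlen, hanti, hbd, _⟩ := mem_SL.mp hl
  refine ⟨fun k i => ?_, fun i h1 h2 => ?_, fun k i h1 h2 h3 => ⟨?_, ?_⟩, fun k i h => ?_⟩
  · unfold Phi; split <;> omega
  · have := hbd (i-1) (by omega)
    unfold Phi
    rw [if_pos ⟨h1, h2.trans (le_refl n), le_refl n, by omega⟩]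
  · unfold Phi
    split
    · rename_i hcond
      rw [if_pos ⟨h1, by omega, by omega, by omega⟩]
    · omega
  · unfold Phi
    split
    · rename_i hcond
      obtain ⟨i', rfl⟩ : ∃ i', i = i' + 1 := ⟨i - 1, by omega⟩
      have hst : l.getD (i'+1) 0 ≤ l.getD i' 0 := hanti i' (by omega)
      simp only [Nat.add_sub_cancel] at *
      rw [if_pos ⟨by omega, by omega, by omega, by omega⟩]
    · omega
  · unfold Phi
    rw [if_neg (by omega)]

lemma phi_inj {n : ℕ} (hn : 1 ≤ n) : ∀ l1 ∈ SL n (n-1), ∀ l2 ∈ SL n (n-1),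
    Phi n l1 = Phi n l2 → l1 = l2 := by
  intro l1 h1 l2 h2 heq
  obtain ⟨len1, _, bd1, _⟩ := mem_SL.mp h1
  obtain ⟨len2, _, bd2, _⟩ := mem_SL.mp h2
  have key : ∀ lA lB : List ℕ, lA.length = n → lB.length = n →
      (∀ i, i < n → lA.getD i 0 + i + 1 ≤ n) →
      Phi n lA = Phi n lB → ∀ i0, i0 < n → lB.getD i0 0 ≤ lA.getD i0 0 := by
    intro lA lB lenA lenB bdA hAB i0 hi0
    have hbA := bdA i0 hi0
    have h1 : Phi n lA (lA.getD i0 0 + i0 + 1) (i0+1) = 1 := by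
      unfold Phi
      rw [if_pos ⟨by omega, by omega, by omega, by simp only [Nat.add_sub_cancel]; omega⟩]
    rw [hAB] at h1
    unfold Phi at h1
    by_contra hc
    rw [if_neg (by simp only [Nat.add_sub_cancel]; omega)] at h1
    exact absurd h1 zero_ne_one
  have e1 := key l1 l2 len1 len2 bd1 heq
  have e2 := key l2 l1 len2 len1 bd2 heq.symm
  apply List.ext_getElem (by omega)
  intro i hi1 hi2
  have a1 : l1.getD i 0 = l1[i] := List.getD_eq_getElem l1 0 hi1
  have a2 : l2.getD i 0 = l2[i] := List.getD_eq_getElem l2 0 hi2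
  have := e1 i (by omega)
  have := e2 i (by omega)
  omega

lemma getD_map_range {n i : ℕ} (f : ℕ → ℕ) (h : i < n) :
    ((List.range n).map f).getD i 0 = f i := by
  rw [List.getD_eq_getElem _ 0 (by simpa using h)]
  simp

lemma phi_surj {n : ℕ} (hn : 1 ≤ n) {m : ℕ → ℕ → ℕ} (hm : IsArr n m) :
    ∃ l ∈ SL n (n-1), Phi n l = m := by
  obtain ⟨hle, hrow, hmono, hvan⟩ := hm
  have hex : ∀ i, 1 ≤ i → i ≤ n → ∃ k, m k i = 1 := fun i h1 h2 => ⟨n, hrow i h1 h2⟩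
  classical
  set A : ℕ → ℕ := fun i => if h : 1 ≤ i ∧ i ≤ n then Nat.find (hex i h.1 h.2) else 0 with hA
  have hAspec : ∀ i, 1 ≤ i → i ≤ n → m (A i) i = 1 := by
    intro i h1 h2
    simp only [hA, dif_pos (⟨h1, h2⟩ : 1 ≤ i ∧ i ≤ n)]
    exact Nat.find_spec (hex i h1 h2)
  have hAmin : ∀ i, 1 ≤ i → i ≤ n → ∀ k, k < A i → m k i = 0 := by
    intro i h1 h2 k hk
    simp only [hA, dif_pos (⟨h1, h2⟩ : 1 ≤ i ∧ i ≤ n)] at hk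
    have := Nat.find_min (hex i h1 h2) hk
    have := hle k i
    omega
  have hAub : ∀ i, 1 ≤ i → i ≤ n → A i ≤ n := by
    intro i h1 h2
    simp only [hA, dif_pos (⟨h1, h2⟩ : 1 ≤ i ∧ i ≤ n)]
    exact Nat.find_le (hrow i h1 h2)
  have hAlb : ∀ i, 1 ≤ i → i ≤ n → i ≤ A i := by
    intro i h1 h2
    by_contra hc
    have h3 := hAspec i h1 h2
    have := hvan (A i) i (by omega)
    omega
  have hup : ∀ i, 1 ≤ i → i ≤ n → ∀ k, A i ≤ k → k ≤ n → m k i = 1 := by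
    intro i h1 h2 k
    induction k with
    | zero => intro h3 h4; have := hAlb i h1 h2; omega
    | succ k ih =>
      intro h3 h4
      rcases Nat.lt_or_ge k (A i) with h5 | h5
      · have : A i = k + 1 := by omega
        rw [← this]; exact hAspec i h1 h2
      · have hk1 : m k i = 1 := ih (by omega) (by omega)
        have := (hmono k i h1 (by have := hAlb i h1 h2; omega) (by omega)).1
        have := hle (k+1) i
        omega
  have hAstep : ∀ i, 1 ≤ i → i + 1 ≤ n → A (i+1) ≤ A i + 1 := by
    intro i h1 h2
    rcases Nat.lt_or_ge (A i) n with h3 | h3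
    · have h4 := hAspec i h1 (by omega)
      have h5 := (hmono (A i) i h1 (hAlb i h1 (by omega)) (by omega)).2
      have h6 : m (A i + 1) (i+1) = 1 := by have := hle (A i + 1) (i+1); omega
      by_contra hc
      have := hAmin (i+1) (by omega) h2 (A i + 1) (by omega)
      omega
    · have := hAub (i+1) (by omega) h2
      omega
  refine ⟨(List.range n).map (fun i0 => A (i0+1) - (i0+1)), ?_, ?_⟩
  · rw [mem_SL]
    refine ⟨by simp, ?_, ?_, ?_⟩
    · intro i hi
      rw [getD_map_range _ (by omega), getD_map_range _ (by omega)]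
      have := hAstep (i+1) (by omega) (by omega)
      have := hAlb (i+1) (by omega) (by omega)
      have := hAlb (i+2) (by omega) (by omega)
      omega
    · intro i hi
      rw [getD_map_range _ hi]
      have := hAub (i+1) (by omega) (by omega)
      have := hAlb (i+1) (by omega) (by omega)
      omega
    · intro h0
      rw [getD_map_range _ (by omega)]
      have := hAub (0+1) (by omega) (by omega)
      have := hAlb (0+1) (by omega) (by omega)
      omega
  · funext k i
    unfold Phi
    rcases Nat.lt_or_ge 0 i with hi | hi
    swap
    · rw [if_neg (by omega)]
      exact (hvan k i (by omega)).symm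
    rcases le_or_gt i k with hik | hik
    swap
    · rw [if_neg (by omega)]
      exact (hvan k i (by omega)).symm
    rcases le_or_gt k n with hkn | hkn
    swap
    · rw [if_neg (by omega)]
      exact (hvan k i (by omega)).symm
    have hin : i ≤ n := by omega
    have hgd : ((List.range n).map (fun i0 => A (i0+1) - (i0+1))).getD (i-1) 0 = A i - i := by
      rw [getD_map_range _ (by omega), show i - 1 + 1 = i by omega]
    rw [hgd]
    have hAl := hAlb i (by omega) hin
    rcases le_or_gt (A i) k with hak | hak
    · rw [if_pos ⟨by omega, hik, hkn, by omega⟩]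
      exact (hup i (by omega) hin k hak hkn).symm
    · rw [if_neg (by omega)]
      exact (hAmin i (by omega) hin k hak).symm

lemma sq_split (x y : ℕ) (hx : x ≤ 1) (hy : y ≤ 1) : x^2 = x*y + x*(1-y) := by
  interval_cases x <;> interval_cases y <;> rfl

lemma dstat_phi {n : ℕ} (hn : 1 ≤ n) {l : List ℕ} (hl : l ∈ SL n (n-1)) :
    Dstat n (Phi n l) + desc l = n - 1 := by
  obtain ⟨hlen, hanti, hbd, _⟩ := mem_SL.mp hl
  have hle : ∀ k i, Phi n l k i ≤ 1 := by intro k i; unfold Phi; split <;> omega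
  have hrow : ∀ k ∈ Finset.Icc 1 (n-1),
      ((∑ i ∈ Finset.Icc 1 k, (Phi n l k i) ^ 2) -
        ∑ i ∈ Finset.Icc 1 (k - 1), Phi n l k i * Phi n l k (i + 1))
      = ∑ i ∈ Finset.Icc 1 k, Phi n l k i * (1 - Phi n l k (i+1)) := by
    intro k hk
    simp only [Finset.mem_Icc] at hk
    have hsplit : Finset.Icc 1 k = insert k (Finset.Icc 1 (k-1)) := by
      ext x; simp only [Finset.mem_Icc, Finset.mem_insert]; omega
    have hnotmem : k ∉ Finset.Icc 1 (k-1) := by simp only [Finset.mem_Icc]; omega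
    rw [hsplit, Finset.sum_insert hnotmem, Finset.sum_insert hnotmem]
    have e1 : ∑ i ∈ Finset.Icc 1 (k-1), (Phi n l k i)^2
        = ∑ i ∈ Finset.Icc 1 (k-1), Phi n l k i * Phi n l k (i+1)
          + ∑ i ∈ Finset.Icc 1 (k-1), Phi n l k i * (1 - Phi n l k (i+1)) := by
      rw [← Finset.sum_add_distrib]
      exact Finset.sum_congr rfl fun i _ => sq_split _ _ (hle _ _) (hle _ _)
    have e2 : (Phi n l k k)^2 = Phi n l k k * (1 - Phi n l k (k+1)) := by
      have hz : Phi n l k (k+1) = 0 := by unfold Phi; rw [if_neg (by omega)]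
      rw [hz]
      have := hle k k
      interval_cases (Phi n l k k) <;> rfl
    omega
  unfold Dstat
  rw [Finset.sum_congr rfl hrow]
  have hext : ∀ k ∈ Finset.Icc 1 (n-1),
      ∑ i ∈ Finset.Icc 1 k, Phi n l k i * (1 - Phi n l k (i+1))
      = ∑ i ∈ Finset.Icc 1 (n-1), Phi n l k i * (1 - Phi n l k (i+1)) := by
    intro k hk
    simp only [Finset.mem_Icc] at hk
    apply Finset.sum_subset
    · intro x hx; simp only [Finset.mem_Icc] at *; omega
    · intro i hi hni
      simp only [Finset.mem_Icc] at hi hni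
      have hz : Phi n l k i = 0 := by unfold Phi; rw [if_neg (by omega)]
      rw [hz, zero_mul]
  rw [Finset.sum_congr rfl hext, Finset.sum_comm]
  have hone : ∀ i ∈ Finset.Icc 1 (n-1),
      ∑ k ∈ Finset.Icc 1 (n-1), Phi n l k i * (1 - Phi n l k (i+1))
      = if l.getD i 0 = l.getD (i-1) 0 then 1 else 0 := by
    intro i hi
    simp only [Finset.mem_Icc] at hi
    have hb1 := hbd (i-1) (by omega)
    have hb2 := hbd i (by omega)
    have hba : l.getD i 0 ≤ l.getD (i-1) 0 := by
      have := hanti (i-1) (by omega)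
      rw [show i-1+1 = i by omega] at this
      exact this
    have hterm : ∀ k ∈ Finset.Icc 1 (n-1), Phi n l k i * (1 - Phi n l k (i+1)) =
        if (k = l.getD (i-1) 0 + i ∧ l.getD i 0 = l.getD (i-1) 0) then 1 else 0 := by
      intro k hk
      simp only [Finset.mem_Icc] at hk
      unfold Phi
      simp only [Nat.add_sub_cancel]
      split_ifs <;> omega
    rw [Finset.sum_congr rfl hterm]
    by_cases hcase : l.getD i 0 = l.getD (i-1) 0
    · simp only [hcase, and_true]
      rw [Finset.sum_ite_eq' (Finset.Icc 1 (n-1)) (l.getD (i-1) 0 + i) (fun _ => 1)]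
      rw [if_pos (by simp only [Finset.mem_Icc]; omega)]
      simp
    · rw [Finset.sum_congr rfl (fun k hk => if_neg (fun hcon => hcase hcon.2)),
        Finset.sum_const_zero, if_neg hcase]
  rw [Finset.sum_congr rfl hone]
  rw [desc_eq_sum l, hlen]
  rw [show Finset.Icc 1 (n-1) = Finset.Ico 1 n by ext x; simp only [Finset.mem_Icc, Finset.mem_Ico]; omega]
  rw [Finset.sum_Ico_eq_sum_range]
  rw [← Finset.sum_add_distrib]
  have hfin : ∀ i ∈ Finset.range (n-1),
      ((if l.getD (1+i) 0 = l.getD (1+i-1) 0 then 1 else 0)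
        + (if l.getD (i+1) 0 < l.getD i 0 then 1 else 0)) = 1 := by
    intro i hi
    simp only [Finset.mem_range] at hi
    rw [show 1+i = i+1 by omega, show i+1-1 = i by omega]
    have := hanti i (by omega)
    split_ifs <;> omega
  rw [Finset.sum_congr rfl hfin, Finset.sum_const, Finset.card_range, smul_eq_mul, mul_one]


lemma nar (m j : ℕ) :
    fc m m j = (((m+1).choose j : ℚ) * ((m+1).choose (j+1))) / (m+1) := by
  have hm0 : ((m : ℚ) + 1) ≠ 0 := by positivity
  rcases j with _ | t
  · simp only [fc, if_pos rfl, Nat.choose_zero_right, Nat.cast_one, mul_one, one_mul,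
      Nat.choose_one_right, sub_zero]
    push_cast
    field_simp
    simp
  rcases le_or_gt (t+1) m with hj | hj
  swap
  · -- j = t+1 > m : both sides 0
    rw [fc, if_neg (Nat.succ_ne_zero t)]
    rw [Nat.choose_eq_zero_of_lt (show m < t+1 by omega),
        Nat.choose_eq_zero_of_lt (show m < t+2 by omega),
        Nat.choose_eq_zero_of_lt (show m+1 < t+2 by omega)]
    simp
  -- main case 1 ≤ j = t+1 ≤ m ; n := m+1
  rw [fc, if_neg (Nat.succ_ne_zero t), Nat.add_sub_cancel]
  rw [eq_div_iff hm0]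
  -- goal: (C(m,t+1)² - C(m,t+2)*C(m,t)) * (m+1) = C(m+1,t+1)*C(m+1,t+2)
  have h1 : ((m+1 : ℕ) : ℚ) * (m.choose (t+1)) = ((m+1).choose (t+2)) * ((t+1)+1) := by
    exact_mod_cast Nat.add_one_mul_choose_eq m (t+1)
  have h2 : ((m+1 : ℕ) : ℚ) * (m.choose t) = ((m+1).choose (t+1)) * (t+1) := by
    exact_mod_cast Nat.add_one_mul_choose_eq m t
  have h3 : ((m+1 : ℕ) : ℚ) * (m.choose (t+2)) = ((m+1).choose (t+3)) * ((t+2)+1) := by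
    exact_mod_cast Nat.add_one_mul_choose_eq m (t+2)
  have h4 : (((m+1).choose (t+3) : ℕ) : ℚ) * ((t+2)+1)
      = ((m+1).choose (t+2)) * (((m+1) : ℚ) - (t+2)) := by
    have hch : (((m + 1).choose (t + 2 + 1) * (t + 2 + 1) : ℕ) : ℚ)
        = (((m + 1).choose (t + 2) * (m + 1 - (t + 2)) : ℕ) : ℚ) :=
      congrArg _ (Nat.choose_succ_right_eq (m+1) (t+2))
    push_cast [Nat.cast_sub (show t+1 ≤ m by omega)] at hch
    linear_combination hch
  have h5 : (((m+1).choose (t+2) : ℕ) : ℚ) * ((t+1)+1)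
      = ((m+1).choose (t+1)) * (((m+1) : ℚ) - (t+1)) := by
    have hch : (((m + 1).choose (t + 1 + 1) * (t + 1 + 1) : ℕ) : ℚ)
        = (((m + 1).choose (t + 1) * (m + 1 - (t + 1)) : ℕ) : ℚ) :=
      congrArg _ (Nat.choose_succ_right_eq (m+1) (t+1))
    push_cast [Nat.cast_sub (show t ≤ m by omega)] at hch
    linear_combination hch
  -- now derive
  have nsq : ((m.choose (t+1) : ℚ)^2 - (m.choose (t+2)) * (m.choose t)) * (((m+1):ℚ) * ((m+1):ℚ))
      = ((m+1).choose (t+1)) * ((m+1).choose (t+2)) * ((m+1):ℚ) := by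
    push_cast at h1 h2 h3 h4 h5 ⊢
    linear_combination (((m:ℚ)+1) * (m.choose (t+1) : ℚ) + ((m+1).choose (t+2) : ℚ) * ((t:ℚ)+2)) * h1
      - (((m:ℚ)+1) * (m.choose (t+2) : ℚ)) * h2
      - ((m+1).choose (t+1) : ℚ) * ((t:ℚ)+1) * h3
      - ((m+1).choose (t+1) : ℚ) * ((t:ℚ)+1) * h4
      + ((m+1).choose (t+2) : ℚ) * ((t:ℚ)+2) * h5
  apply mul_right_cancel₀ hm0
  push_cast at nsq ⊢
  linear_combination nsq


lemma coeff_ext {n : ℕ} (a b : ℕ → ℚ)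
    (h : ∑ j ∈ Finset.range n, Polynomial.C (a j) * X ^ j
       = ∑ j ∈ Finset.range n, Polynomial.C (b j) * X ^ j)
    {j : ℕ} (hj : j < n) : a j = b j := by
  have hc := congrArg (fun p => Polynomial.coeff p j) h
  simp only [Polynomial.finset_sum_coeff, Polynomial.coeff_C_mul, Polynomial.coeff_X_pow,
    mul_ite, mul_one, mul_zero, Finset.sum_ite_eq, Finset.mem_range, hj, if_true] at hc
  exact hc

end Stmt11

/-- for `n ≥ 1`, `∑_{m ∈ T_n} q^{D(m)}` is the `n`-th Narayana
polynomial `∑_{j=0}^{n-1} (1/n)(n choose j)(n choose j+1) q^{n-1-j}`. -/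
theorem stmt_11 (n : ℕ) (hn : 1 ≤ n) :
    (∑ᶠ m ∈ {m : ℕ → ℕ → ℕ | IsArr n m}, (Polynomial.X : Polynomial ℚ) ^ Dstat n m) =
      ∑ j ∈ Finset.range n,
        Polynomial.C ((n.choose j * n.choose (j + 1) : ℚ) / n) *
          (Polynomial.X : Polynomial ℚ) ^ (n - 1 - j) := by
  classical
  open Stmt11 Finset Polynomial in
  have hP := Stmt11.Pol_eq (n-1) (n-1) le_rfl
  rw [show n-1+1 = n by omega] at hP
  have hfib : ∀ l ∈ Stmt11.SL n (n-1), Stmt11.desc l ∈ Finset.range n := by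
    intro l hl
    have := Stmt11.dstat_phi hn hl
    simp only [Finset.mem_range]
    omega
  have hPol : Stmt11.Pol n (n-1) = ∑ j ∈ Finset.range n,
      Polynomial.C (((((Stmt11.SL n (n-1)).filter (fun l => Stmt11.desc l = j)).card : ℕ) : ℚ))
        * (Polynomial.X : Polynomial ℚ) ^ j := by
    unfold Stmt11.Pol
    rw [← Finset.sum_fiberwise_of_maps_to hfib (fun l => (Polynomial.X : Polynomial ℚ) ^ Stmt11.desc l)]
    refine Finset.sum_congr rfl fun j hj => ?_
    calc ∑ l ∈ (Stmt11.SL n (n-1)).filter (fun l => Stmt11.desc l = j),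
          (Polynomial.X : Polynomial ℚ) ^ Stmt11.desc l
        = ∑ l ∈ (Stmt11.SL n (n-1)).filter (fun l => Stmt11.desc l = j),
          (Polynomial.X : Polynomial ℚ) ^ j :=
        Finset.sum_congr rfl (fun l hl => by rw [(Finset.mem_filter.mp hl).2])
      _ = _ := by
        rw [Finset.sum_const, nsmul_eq_mul, Polynomial.C_eq_natCast]
  have hcard : ∀ j, j < n →
      ((((Stmt11.SL n (n-1)).filter (fun l => Stmt11.desc l = j)).card : ℕ) : ℚ)
        = Stmt11.fc (n-1) (n-1) j :=
    fun j hj => Stmt11.coeff_ext _ _ (hPol.symm.trans hP) hj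
  have hset : {m : ℕ → ℕ → ℕ | IsArr n m} = ↑((Stmt11.SL n (n-1)).image (Stmt11.Phi n)) := by
    ext mm
    simp only [Set.mem_setOf_eq, Finset.coe_image, Set.mem_image, Finset.mem_coe]
    constructor
    · intro hm
      obtain ⟨l, hl, hE⟩ := Stmt11.phi_surj hn hm
      exact ⟨l, hl, hE⟩
    · rintro ⟨l, hl, rfl⟩
      exact Stmt11.phi_isArr hn hl
  rw [hset, finsum_mem_coe_finset,
    Finset.sum_image (fun x hx y hy hxy => Stmt11.phi_inj hn x hx y hy hxy)]
  rw [Finset.sum_congr rfl (fun l hl => by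
    rw [show Dstat n (Stmt11.Phi n l) = n - 1 - Stmt11.desc l from by
      have := Stmt11.dstat_phi hn hl; omega])]
  rw [← Finset.sum_fiberwise_of_maps_to hfib
    (fun l => (Polynomial.X : Polynomial ℚ) ^ (n - 1 - Stmt11.desc l))]
  refine Finset.sum_congr rfl fun j hj => ?_
  simp only [Finset.mem_range] at hj
  calc ∑ l ∈ (Stmt11.SL n (n-1)).filter (fun l => Stmt11.desc l = j),
        (Polynomial.X : Polynomial ℚ) ^ (n - 1 - Stmt11.desc l)
      = ∑ l ∈ (Stmt11.SL n (n-1)).filter (fun l => Stmt11.desc l = j),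
        (Polynomial.X : Polynomial ℚ) ^ (n - 1 - j) :=
      Finset.sum_congr rfl (fun l hl => by rw [(Finset.mem_filter.mp hl).2])
    _ = Polynomial.C (((((Stmt11.SL n (n-1)).filter (fun l => Stmt11.desc l = j)).card : ℕ) : ℚ))
        * (Polynomial.X : Polynomial ℚ) ^ (n - 1 - j) := by
      rw [Finset.sum_const, nsmul_eq_mul, Polynomial.C_eq_natCast]
    _ = _ := by
      rw [hcard j hj, Stmt11.nar (n-1) j, show n-1+1 = n by omega]
      congr 1
      have hcast : ((n-1 : ℕ) : ℚ) = (n : ℚ) - 1 := by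
        push_cast [Nat.cast_sub hn]; ring
      rw [hcast]
      ring
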